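/- Let A be an m×n complex matrix and C an l×n complex matrix. Then rank(A) + rank(C (I - A⁺ A)) = rank(C) + rank(A (I - C⁺ C)) = rank of the block matrix formed by stacking A above C. -/

import Mathlib

open Matrix

/-- `Ap` is the Moore–Penrose inverse of `A`. -/
def IsMoorePenrose {m n : ℕ} (A : Matrix (Fin m) (Fin n) ℂ)
    (Ap : Matrix (Fin n) (Fin m) ℂ) : Prop :=
  A * Ap * A = A ∧ Ap * A * Ap = Ap ∧ (A * Ap)ᴴ = A * Ap ∧ (Ap * A)ᴴ = Ap * A

lemma range_proj_eq_ker {m n : ℕ} (A : Matrix (Fin m) (Fin n) ℂ)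
    (Ap : Matrix (Fin n) (Fin m) ℂ) (hA : IsMoorePenrose A Ap) :
    LinearMap.range ((1 - Ap * A) : Matrix (Fin n) (Fin n) ℂ).mulVecLin
      = LinearMap.ker A.mulVecLin := by
  apply le_antisymm
  · rintro x ⟨y, rfl⟩
    simp only [LinearMap.mem_ker, ← mulVecLin_mul, ← LinearMap.comp_apply, ← mulVecLin_mul]
    have : A * (1 - Ap * A) = 0 := by
      rw [Matrix.mul_sub, Matrix.mul_one, ← Matrix.mul_assoc, hA.1, sub_self]
    simp [this]
  · intro x hx
    simp only [LinearMap.mem_ker, mulVecLin_apply] at hx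
    exact ⟨x, by simp [mulVecLin_apply, sub_mulVec, ← mulVec_mulVec, hx]⟩

lemma ker_fromRows {m n l : ℕ} (A : Matrix (Fin m) (Fin n) ℂ) (C : Matrix (Fin l) (Fin n) ℂ) :
    LinearMap.ker (Matrix.fromRows A C).mulVecLin
      = LinearMap.ker A.mulVecLin ⊓ LinearMap.ker C.mulVecLin := by
  ext x
  simp only [LinearMap.mem_ker, Submodule.mem_inf, mulVecLin_apply, fromRows_mulVec,
    funext_iff, Sum.forall, Sum.elim_inl, Sum.elim_inr, Pi.zero_apply]

lemma rank_aux {m n l : ℕ} (A : Matrix (Fin m) (Fin n) ℂ) (C : Matrix (Fin l) (Fin n) ℂ)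
    (Ap : Matrix (Fin n) (Fin m) ℂ) (hA : IsMoorePenrose A Ap) :
    A.rank + (C * (1 - Ap * A)).rank = (Matrix.fromRows A C).rank := by
  classical
  set f := A.mulVecLin
  set g := C.mulVecLin
  set K := LinearMap.ker f
  have hn : Module.finrank ℂ (Fin n → ℂ) = n := by simp
  -- rank A + dim K = n
  have h1 : A.rank + Module.finrank ℂ K = n := by
    have hrn := f.finrank_range_add_finrank_ker
    rw [hn] at hrn
    exact hrn
  -- range of C * (1 - Ap*A) = map g K
  have h2 : LinearMap.range (C * (1 - Ap * A)).mulVecLin = Submodule.map g K := by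
    rw [mulVecLin_mul, LinearMap.range_comp, range_proj_eq_ker A Ap hA]
  -- rank-nullity on g restricted to K
  have h3 : (C * (1 - Ap * A)).rank
      + Module.finrank ℂ ↥(LinearMap.ker g ⊓ K) = Module.finrank ℂ K := by
    have hrn := (g.domRestrict K).finrank_range_add_finrank_ker
    rw [LinearMap.range_domRestrict, LinearMap.ker_domRestrict] at hrn
    have hker : (LinearMap.ker g).comap K.subtype
        = ((LinearMap.ker g ⊓ K)).comap K.subtype := by
      rw [Submodule.comap_inf, Submodule.comap_subtype_self, inf_top_eq]
    have hfr : Module.finrank ℂ ((LinearMap.ker g).comap K.subtype)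
        = Module.finrank ℂ ↥(LinearMap.ker g ⊓ K) := by
      rw [hker]
      exact (Submodule.comapSubtypeEquivOfLe inf_le_right).finrank_eq
    rw [hfr] at hrn
    rw [Matrix.rank, h2]
    exact hrn
  -- rank fromRows + dim (ker f ⊓ ker g) = n
  have h4 : (Matrix.fromRows A C).rank
      + Module.finrank ℂ ↥(LinearMap.ker f ⊓ LinearMap.ker g) = n := by
    have hrn := (Matrix.fromRows A C).mulVecLin.finrank_range_add_finrank_ker
    rw [ker_fromRows, hn] at hrn
    exact hrn
  have : LinearMap.ker g ⊓ K = LinearMap.ker f ⊓ LinearMap.ker g := inf_comm _ _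
  rw [this] at h3
  omega

lemma rank_fromRows_comm {m n l : ℕ} (A : Matrix (Fin m) (Fin n) ℂ)
    (C : Matrix (Fin l) (Fin n) ℂ) :
    (Matrix.fromRows C A).rank = (Matrix.fromRows A C).rank := by
  have h : Matrix.fromRows C A
      = Matrix.reindex (Equiv.sumComm (Fin m) (Fin l)) (Equiv.refl (Fin n)) (Matrix.fromRows A C) := by
    ext (i | i) j <;> rfl
  rw [h, Matrix.rank, Matrix.rank, mulVecLin_reindex, LinearMap.range_comp, LinearMap.range_comp,
    LinearEquiv.range, Submodule.map_top, LinearEquiv.finrank_map_eq]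

theorem rank_add_rank_proj_row {m n l : ℕ}
    (A : Matrix (Fin m) (Fin n) ℂ) (C : Matrix (Fin l) (Fin n) ℂ)
    (Ap : Matrix (Fin n) (Fin m) ℂ) (Cp : Matrix (Fin n) (Fin l) ℂ)
    (hA : IsMoorePenrose A Ap) (hC : IsMoorePenrose C Cp) :
    A.rank + (C * (1 - Ap * A)).rank = C.rank + (A * (1 - Cp * C)).rank ∧
    C.rank + (A * (1 - Cp * C)).rank = (Matrix.fromRows A C).rank := by
  have h1 := rank_aux A C Ap hA
  have h2 := rank_aux C A Cp hC
  rw [rank_fromRows_comm] at h2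
  exact ⟨h1.trans h2.symm, h2⟩
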